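/- Let f = sec(2x), g = 2 tan(2x), and let D denote d/dx. For all n ≥ 1, D^n(f) = Σ_{k=0}^{⌊n/2⌋} b(n,k) f^{2k+1} g^{n−2k}, where b(n,k) are defined by b(1,0)=1, b(1,k)=0 for k≥1, and b(n,k) = (2k+1)b(n−1,k) + 4(n+1−2k)b(n−1,k−1). -/

import Mathlib

open Finset

private lemma hasDerivAt_secf (x : ℝ) (hx : Real.cos (2*x) ≠ 0) :
    HasDerivAt (fun x : ℝ => (Real.cos (2*x))⁻¹)
      ((Real.cos (2*x))⁻¹ * (2 * Real.tan (2*x))) x := by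
  have h1 : HasDerivAt (fun x : ℝ => Real.cos (2*x)) (-Real.sin (2*x) * 2) x := by
    exact ((Real.hasDerivAt_cos (2*x)).comp x ((hasDerivAt_id x).const_mul 2)).congr_deriv (by simp)
  have h2 := h1.inv hx
  refine h2.congr_deriv ?_
  rw [Real.tan_eq_sin_div_cos]
  field_simp

private lemma hasDerivAt_tang (x : ℝ) (hx : Real.cos (2*x) ≠ 0) :
    HasDerivAt (fun x : ℝ => 2 * Real.tan (2*x))
      (4 * ((Real.cos (2*x))⁻¹)^2) x := by
  have h1 : HasDerivAt (fun x : ℝ => Real.tan (2*x)) (1 / Real.cos (2*x) ^ 2 * 2) x :=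
    (Real.hasDerivAt_tan hx).comp x (by simpa using (hasDerivAt_id x).const_mul 2)
  have h2 := h1.const_mul 2
  refine h2.congr_deriv ?_
  field_simp
  ring

/-- Vanishing of b outside the admissible range. -/
private lemma bzero (b : ℕ → ℤ → ℝ) (hb1' : ∀ k : ℤ, k ≠ 0 → b 1 k = 0)
    (hbrec : ∀ n : ℕ, 2 ≤ n → ∀ k : ℤ,
      b n k = (2 * k + 1) * b (n - 1) k + 4 * (n + 1 - 2 * k) * b (n - 1) (k - 1)) :
    ∀ n : ℕ, 1 ≤ n → ∀ k : ℤ, (k < 0 ∨ (n : ℤ) < 2 * k) → b n k = 0 := by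
  intro n
  induction n with
  | zero => intro h; omega
  | succ m ih =>
    intro _ k hk
    rcases Nat.lt_or_ge m 1 with hm | hm
    · interval_cases m
      exact hb1' k (by omega)
    · rw [hbrec (m+1) (by omega) k]
      simp only [Nat.add_sub_cancel]
      rcases hk with hk | hk
      · rw [ih hm k (Or.inl hk), ih hm (k-1) (Or.inl (by omega))]; ring
      · rw [ih hm k (Or.inr (by push_cast at hk ⊢; omega))]
        by_cases h2 : (2:ℤ) * k = (m:ℤ) + 2
        · have hc : ((m+1 : ℕ) : ℝ) + 1 - 2 * (k : ℝ) = 0 := by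
            have h3 : ((m:ℤ)+1) + 1 - 2*k = 0 := by omega
            exact_mod_cast h3
          rw [hc]; ring
        · rw [ih hm (k-1) (Or.inr (by push_cast at hk ⊢; omega))]; ring

/-- The per-index algebraic identity used in the inductive step. -/
private lemma per_k (B F G : ℝ) (n k : ℕ) (h : 2*k ≤ n) :
    (2*(k:ℝ)+1) * B * F^(2*k+1) * G^(n+1-2*k)
      + 4*((n:ℝ)+2-2*((k:ℝ)+1)) * B * F^(2*(k+1)+1) * G^(n+1-2*(k+1))
    = (B * (↑(2*k+1) * F^(2*k+1-1) * (F * G))) * G^(n-2*k)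
      + (B * F^(2*k+1)) * (↑(n-2*k) * G^(n-2*k-1) * (4*F^2)) := by
  obtain ⟨m, rfl⟩ : ∃ m, n = 2*k + m := ⟨n - 2*k, by omega⟩
  have e1 : 2*k+m+1-2*k = m+1 := by omega
  have e2 : 2*k+m-2*k = m := by omega
  have e3 : 2*k+1-1 = 2*k := by omega
  rw [e1, e2, e3]
  rcases m with _ | p
  · have e4 : 2*k+0+1-2*(k+1) = 0 := by omega
    rw [e4]
    push_cast
    ring
  · have e4 : 2*k+(p+1)+1-2*(k+1) = p := by omega
    have e5 : p+1-1 = p := by omega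
    rw [e4, e5]
    push_cast
    ring

theorem iterated_deriv_sec_gamma (b : ℕ → ℤ → ℝ)
    (hb1 : b 1 0 = 1) (hb1' : ∀ k : ℤ, k ≠ 0 → b 1 k = 0)
    (hbrec : ∀ n : ℕ, 2 ≤ n → ∀ k : ℤ,
      b n k = (2 * k + 1) * b (n - 1) k + 4 * (n + 1 - 2 * k) * b (n - 1) (k - 1)) :
    ∀ n : ℕ, 1 ≤ n → ∀ x : ℝ, Real.cos (2 * x) ≠ 0 →
      deriv^[n] (fun x : ℝ => (Real.cos (2 * x))⁻¹) x =
        ∑ k ∈ Finset.range (n / 2 + 1),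
          b n k * ((Real.cos (2 * x))⁻¹) ^ (2 * k + 1) *
            (2 * Real.tan (2 * x)) ^ (n - 2 * k) := by
  have hz := bzero b hb1' hbrec
  set f : ℝ → ℝ := fun x => (Real.cos (2*x))⁻¹ with hf_def
  set g : ℝ → ℝ := fun x => 2 * Real.tan (2*x) with hg_def
  set S : ℕ → ℝ → ℝ := fun n x => ∑ k ∈ Finset.range (n+1),
      b n k * (f x) ^ (2*k+1) * (g x) ^ (n-2*k) with hS_def
  -- Main inductive step: derivative of S n is S (n+1)
  have hstep : ∀ n : ℕ, 1 ≤ n → ∀ x : ℝ, Real.cos (2*x) ≠ 0 →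
      HasDerivAt (S n) (S (n+1) x) x := by
    intro n hn x hx
    have hf := hasDerivAt_secf x hx
    have hg := hasDerivAt_tang x hx
    have hterm : ∀ k ∈ Finset.range (n+1),
        HasDerivAt (fun y => b n k * (f y)^(2*k+1) * (g y)^(n-2*k))
          ((b n k * (↑(2*k+1) * (f x)^(2*k+1-1) * (f x * g x))) * (g x)^(n-2*k)
            + (b n k * (f x)^(2*k+1)) * (↑(n-2*k) * (g x)^(n-2*k-1) * (4*(f x)^2))) x := by
      intro k _
      exact ((hf.pow (2*k+1)).const_mul (b n k)).mul (hg.pow (n-2*k))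
    have hsum := HasDerivAt.fun_sum hterm
    refine hsum.congr_deriv (Eq.symm ?_)
    simp only [hS_def]
    have expand : ∀ j ∈ Finset.range (n+2),
        b (n+1) j * (f x)^(2*j+1) * (g x)^(n+1-2*j)
        = (2*(j:ℝ)+1) * b n j * (f x)^(2*j+1) * (g x)^(n+1-2*j)
          + 4*((n:ℝ)+2-2*(j:ℝ)) * b n ((j:ℤ)-1) * (f x)^(2*j+1) * (g x)^(n+1-2*j) := by
      intro j _
      rw [hbrec (n+1) (by omega) (j:ℤ)]
      push_cast
      ring
    rw [Finset.sum_congr rfl expand, Finset.sum_add_distrib]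
    rw [Finset.sum_range_succ]
    have htop : (2*(((n+1:ℕ)):ℝ)+1) * b n ((n+1:ℕ):ℤ) * (f x)^(2*(n+1)+1) * (g x)^(n+1-2*(n+1)) = 0 := by
      rw [hz n hn ((n+1:ℕ):ℤ) (Or.inr (by omega))]; ring
    rw [htop, add_zero]
    rw [Finset.sum_range_succ' (fun j => 4*((n:ℝ)+2-2*(j:ℝ)) * b n ((j:ℤ)-1) * (f x)^(2*j+1) * (g x)^(n+1-2*j)) (n+1)]
    have hzero : 4*((n:ℝ)+2-2*(((0:ℕ)):ℝ)) * b n (((0:ℕ):ℤ)-1) * (f x)^(2*0+1) * (g x)^(n+1-2*0) = 0 := by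
      rw [show (((0:ℕ):ℤ)-1 : ℤ) = -1 by norm_num, hz n hn (-1) (Or.inl (by omega))]; ring
    rw [hzero, add_zero, ← Finset.sum_add_distrib]
    apply Finset.sum_congr rfl
    intro k hk
    rcases le_or_gt (2*k) n with h2k | h2k
    · have hpk := per_k (b n k) (f x) (g x) n k h2k
      push_cast at hpk ⊢
      rw [show ((k:ℤ)+1-1 : ℤ) = (k:ℤ) from by ring]
      linarith [hpk]
    · have hbk : b n k = 0 := hz n hn k (Or.inr (by omega))
      have hbk' : b n ((k:ℤ)+1-1) = 0 := by
        rw [show ((k:ℤ)+1-1 : ℤ) = (k:ℤ) by ring]; exact hbk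
      push_cast
      rw [hbk, hbk']
      ring
  -- iterated derivative equals the extended sum
  have hopen : IsOpen {y : ℝ | Real.cos (2*y) ≠ 0} := by
    have hcont : Continuous fun y : ℝ => Real.cos (2*y) :=
      Real.continuous_cos.comp (continuous_const.mul continuous_id)
    exact isOpen_compl_singleton.preimage hcont
  have main : ∀ n : ℕ, 1 ≤ n → ∀ x : ℝ, Real.cos (2*x) ≠ 0 →
      deriv^[n] f x = S n x := by
    intro n
    induction n with
    | zero => intro h; omega
    | succ m ih =>
      intro _ x hx
      rcases Nat.lt_or_ge m 1 with hm | hm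
      · interval_cases m
        show deriv f x = S 1 x
        rw [hf_def, (hasDerivAt_secf x hx).deriv]
        simp only [hS_def]
        rw [Finset.sum_range_succ, Finset.sum_range_succ, Finset.sum_range_zero]
        norm_num [hb1, hf_def, hg_def]
        rw [hz 1 le_rfl 1 (Or.inr (by norm_num))]
        ring_nf
        tauto
      · rw [Function.iterate_succ_apply']
        have hev : deriv^[m] f =ᶠ[nhds x] S m :=
          Filter.eventuallyEq_of_mem (hopen.mem_nhds hx) (fun y hy => ih hm y hy)
        rw [hev.deriv_eq, (hstep m hm x hx).deriv]
  intro n hn x hx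
  rw [main n hn x hx]
  simp only [hS_def]
  apply (Finset.sum_subset (Finset.range_subset_range.mpr (by omega)) ?_).symm
  intro k hk hk'
  simp only [Finset.mem_range] at hk hk'
  rw [hz n hn k (Or.inr (by omega))]
  ring
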